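/- Let λ, r, s be real numbers with s ≠ 0 and sλ < 0, let ε = ±1, and define u(ξ) = −(rε/(6s)) √(−6s/λ) [1 − tanh(rξ/(6s))]. Then u satisfies the traveling-wave mKdV–Burgers ODE ω u' + λ u² u' + r u'' + s u''' = 0 with ω = 2r²/(9s), for all ξ ∈ ℝ. -/

import Mathlib

private lemma tanh_hasDerivAt (x : ℝ) :
    HasDerivAt Real.tanh (1 - Real.tanh x ^ 2) x := by
  have hc : Real.cosh x ≠ 0 := ne_of_gt (Real.cosh_pos x)
  have h := (Real.hasDerivAt_sinh x).div (Real.hasDerivAt_cosh x) hc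
  have hfun : Real.tanh = fun y => Real.sinh y / Real.cosh y := by
    funext y; exact Real.tanh_eq_sinh_div_cosh y
  rw [hfun]
  refine h.congr_deriv ?_
  have h1 : Real.cosh x ^ 2 - Real.sinh x ^ 2 = 1 := Real.cosh_sq_sub_sinh_sq x
  field_simp

theorem mkdv_burgers_tanh_solution
    (lam r s ε : ℝ) (hs : s ≠ 0) (hsl : s * lam < 0) (hε : ε = 1 ∨ ε = -1)
    (u : ℝ → ℝ)
    (hu : ∀ ξ, u ξ =
      -(r * ε / (6 * s)) * Real.sqrt (-6 * s / lam) *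
        (1 - Real.tanh (r * ξ / (6 * s))))
    (ξ : ℝ) :
    (2 * r ^ 2 / (9 * s)) * deriv u ξ + lam * u ξ ^ 2 * deriv u ξ
      + r * deriv (deriv u) ξ + s * deriv (deriv (deriv u)) ξ = 0 := by
  have hl : lam ≠ 0 := by
    intro h; rw [h, mul_zero] at hsl; exact lt_irrefl 0 hsl
  set A : ℝ := -(r * ε / (6 * s)) * Real.sqrt (-6 * s / lam) with hA
  set c : ℝ := r / (6 * s) with hc
  set T : ℝ → ℝ := fun x => Real.tanh (c * x) with hT
  have huf : u = fun x => A * (1 - T x) := by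
    funext x
    rw [hu x]
    simp only [hT]
    rw [hc]; ring_nf
  -- derivative of T
  have hTd : ∀ x, HasDerivAt T ((1 - T x ^ 2) * c) x := by
    intro x
    have h0 : HasDerivAt (fun y : ℝ => c * y) c x := by
      simpa using (hasDerivAt_id x).const_mul c
    exact (tanh_hasDerivAt (c * x)).comp x h0
  -- first derivative of u
  have hd1 : deriv u = fun x => -(A * c) * (1 - T x ^ 2) := by
    funext x
    have : HasDerivAt u (-(A * c) * (1 - T x ^ 2)) x := by
      rw [huf]
      have := (((hTd x).const_sub 1).const_mul A)
      exact this.congr_deriv (by ring)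
    exact this.deriv
  -- second derivative
  have hd2 : deriv (deriv u) = fun x => 2 * A * c ^ 2 * (T x * (1 - T x ^ 2)) := by
    funext x
    have : HasDerivAt (deriv u) (2 * A * c ^ 2 * (T x * (1 - T x ^ 2))) x := by
      rw [hd1]
      have := (((hTd x).pow 2).const_sub 1).const_mul (-(A * c))
      exact this.congr_deriv (by ring)
    exact this.deriv
  -- third derivative
  have hd3 : deriv (deriv (deriv u)) =
      fun x => 2 * A * c ^ 3 * ((1 - T x ^ 2) * (1 - 3 * T x ^ 2)) := by
    funext x
    have : HasDerivAt (deriv (deriv u))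
        (2 * A * c ^ 3 * ((1 - T x ^ 2) * (1 - 3 * T x ^ 2))) x := by
      rw [hd2]
      have h1 : HasDerivAt (fun y => T y * (1 - T y ^ 2))
          ((c * (1 - T x ^ 2)) * (1 - T x ^ 2) +
            T x * (-(2 * T x * (c * (1 - T x ^ 2))))) x := by
        have := (hTd x).mul (((hTd x).pow 2).const_sub 1)
        exact this.congr_deriv (by simp only [Pi.pow_apply]; ring)
      have := h1.const_mul (2 * A * c ^ 2)
      exact this.congr_deriv (by ring)
    exact this.deriv
  -- key algebraic facts
  have hsq : Real.sqrt (-6 * s / lam) ^ 2 = -6 * s / lam := by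
    apply Real.sq_sqrt
    have heq : -6 * s / lam = (-6 * (s * lam)) / lam ^ 2 := by
      field_simp
    rw [heq]
    apply div_nonneg (by linarith) (sq_nonneg lam)
  have hε2 : ε ^ 2 = 1 := by rcases hε with h | h <;> rw [h] <;> norm_num
  have hA2 : lam * A ^ 2 = -6 * s * c ^ 2 := by
    rw [hA, hc, mul_pow, hsq]
    field_simp
    linear_combination (-r ^ 2) * hε2
  have hr : r = 6 * s * c := by rw [hc]; field_simp
  have htt : Real.tanh (r * ξ / (6 * s)) = T ξ := by
    simp only [hT, hc]; ring_nf
  clear_value A c T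
  rw [hu ξ, hd3, hd2, hd1, htt]
  set t := T ξ with hts
  clear_value t
  rw [hr]
  beta_reduce
  rw [← hts]
  field_simp
  linear_combination (9 * c * A * (t ^ 4 - 2 * t ^ 3 + 2 * t - 1)) * hA2
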